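/- For any positive semidefinite Hermitian n×n complex matrix A and any irreducible character χ^λ of the symmetric group S_n indexed by a partition λ of n, the λ-immanant of A satisfies Imm_{χ^λ}(A) ≥ χ^λ(1) · det(A). -/

import Mathlib

open scoped ComplexOrder

/-- The λ-immanant of a complex `m × m` matrix with respect to a class function `χ`:
`Imm_χ(B) = ∑_{σ ∈ S_m} χ(σ) ∏_i B_{σ(i), i}`. -/
noncomputable def immanant {m : ℕ} (χ : Equiv.Perm (Fin m) → ℂ)
    (B : Matrix (Fin m) (Fin m) ℂ) : ℂ :=
  ∑ σ : Equiv.Perm (Fin m), χ σ * ∏ i, B (σ i) i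

open Matrix


open scoped MatrixOrder in
lemma exists_unitary_char {G : Type} [Group G] [Fintype G] (V : FDRep ℂ G) :
    ∃ (d : ℕ) (U : G → Matrix (Fin d) (Fin d) ℂ),
      ∀ ρ τ : G, FDRep.character V (ρ⁻¹ * τ) = ((U ρ)ᴴ * U τ).trace := by
  classical
  set d := Module.finrank ℂ V with hd
  let b := Module.finBasis ℂ V
  let M : G → Matrix (Fin d) (Fin d) ℂ := fun g => LinearMap.toMatrix b b (V.ρ g)
  have hMmul : ∀ g h : G, M (g * h) = M g * M h := by
    intro g h
    simp only [M, _root_.map_mul, LinearMap.toMatrix_mul]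
  have hM1 : M 1 = 1 := by simp only [M, _root_.map_one, LinearMap.toMatrix_one]
  have htr : ∀ g, (M g).trace = FDRep.character V g := by
    intro g
    rw [FDRep.character, LinearMap.trace_eq_matrix_trace ℂ b]
  -- the averaged positive matrix
  set P : Matrix (Fin d) (Fin d) ℂ := ∑ g : G, (M g)ᴴ * M g with hP
  have hPsd : ∀ g : G, ((M g)ᴴ * M g).PosSemidef := fun g =>
    Matrix.posSemidef_conjTranspose_mul_self (M g)
  have hPpos : P.PosDef := by
    rw [hP, ← Finset.add_sum_erase Finset.univ _ (Finset.mem_univ (1 : G))]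
    have h1 : ((M 1)ᴴ * M 1) = 1 := by rw [hM1]; simp
    rw [h1]
    refine Matrix.PosDef.add_posSemidef Matrix.PosDef.one ?_
    refine Finset.sum_induction _ _ (fun a b ha hb => ha.add hb) Matrix.PosSemidef.zero ?_
    exact fun g _ => hPsd g
  have hPinv : ∀ g : G, (M g)ᴴ * P * M g = P := by
    intro g
    rw [hP, Matrix.mul_sum, Matrix.sum_mul]
    refine Fintype.sum_equiv (Equiv.mulRight g) _ _ ?_
    intro h
    simp only [Equiv.coe_mulRight, hMmul, Matrix.conjTranspose_mul]
    noncomm_ring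
  -- square root
  set C := CFC.sqrt P with hC
  have hCH : Cᴴ = C := (CFC.sqrt_nonneg P).posSemidef.isHermitian
  have hCC : C * C = P := CFC.sqrt_mul_sqrt_self P hPpos.posSemidef.nonneg
  have hdet : IsUnit C.det := by
    have h2 : C.det * C.det = P.det := by rw [← Matrix.det_mul, hCC]
    have := hPpos.det_pos
    refine isUnit_iff_ne_zero.mpr ?_
    intro h0
    rw [h0, mul_zero] at h2
    exact (ne_of_gt this) h2.symm
  have hCCinv : C * C⁻¹ = 1 := Matrix.mul_nonsing_inv C hdet
  have hCinvC : C⁻¹ * C = 1 := Matrix.nonsing_inv_mul C hdet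
  -- the unitary representation
  set U : G → Matrix (Fin d) (Fin d) ℂ := fun g => C * M g * C⁻¹ with hU
  have hUmul : ∀ g h : G, U (g * h) = U g * U h := by
    intro g h
    simp only [hU, hMmul]
    calc C * (M g * M h) * C⁻¹ = C * M g * (C⁻¹ * C) * M h * C⁻¹ := by
          rw [hCinvC]; noncomm_ring
      _ = C * M g * C⁻¹ * (C * M h * C⁻¹) := by noncomm_ring
  have hU1 : U 1 = 1 := by simp only [hU, hM1]; rw [mul_one, hCCinv]
  have hUtr : ∀ g, (U g).trace = FDRep.character V g := by
    intro g
    rw [hU]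
    rw [Matrix.trace_mul_cycle, hCinvC, one_mul, htr]
  have hUunit : ∀ g, (U g)ᴴ * U g = 1 := by
    intro g
    have : (U g)ᴴ = C⁻¹ᴴ * (M g)ᴴ * Cᴴ := by
      simp only [hU, Matrix.conjTranspose_mul, Matrix.mul_assoc]
    rw [this, hCH, Matrix.conjTranspose_nonsing_inv, hCH]
    calc C⁻¹ * (M g)ᴴ * C * (C * M g * C⁻¹)
        = C⁻¹ * ((M g)ᴴ * (C * C) * M g) * C⁻¹ := by noncomm_ring
      _ = C⁻¹ * P * C⁻¹ := by rw [hCC, hPinv]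
      _ = C⁻¹ * (C * C) * C⁻¹ := by rw [hCC]
      _ = 1 := by rw [← Matrix.mul_assoc, hCinvC, one_mul, hCCinv]
  have hUinv : ∀ g, U g⁻¹ = (U g)ᴴ := by
    intro g
    have h1 : U g * U g⁻¹ = 1 := by rw [← hUmul, mul_inv_cancel, hU1]
    calc U g⁻¹ = ((U g)ᴴ * U g) * U g⁻¹ := by rw [hUunit, one_mul]
      _ = (U g)ᴴ * (U g * U g⁻¹) := by rw [Matrix.mul_assoc]
      _ = (U g)ᴴ := by rw [h1, mul_one]
  refine ⟨d, U, fun ρ τ => ?_⟩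
  rw [← hUtr, hUmul, hUinv]

lemma char_form_nonneg {G : Type} [Group G] [Fintype G] (V : FDRep ℂ G) (c : G → ℂ) :
    0 ≤ ∑ ρ : G, ∑ τ : G, FDRep.character V (ρ⁻¹ * τ) * (star (c ρ) * c τ) := by
  classical
  obtain ⟨d, U, hU⟩ := exists_unitary_char V
  set X : Matrix (Fin d) (Fin d) ℂ := ∑ τ : G, c τ • U τ with hX
  have hXH : Xᴴ = ∑ ρ : G, star (c ρ) • (U ρ)ᴴ := by
    rw [hX, Matrix.conjTranspose_sum]
    exact Finset.sum_congr rfl fun ρ _ => Matrix.conjTranspose_smul (c ρ) (U ρ)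
  have key : ∑ ρ : G, ∑ τ : G, FDRep.character V (ρ⁻¹ * τ) * (star (c ρ) * c τ)
      = (Xᴴ * X).trace := by
    rw [hXH, hX, Finset.sum_mul_sum, Matrix.trace_sum]
    refine Finset.sum_congr rfl fun ρ _ => ?_
    rw [Matrix.trace_sum]
    refine Finset.sum_congr rfl fun τ _ => ?_
    rw [hU ρ τ, smul_mul_assoc, mul_smul_comm, smul_smul, Matrix.trace_smul, smul_eq_mul,
      mul_comm]
  rw [key]
  have : (Xᴴ * X).trace = ∑ i, ∑ j, star (X j i) * X j i := by
    rw [Matrix.trace]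
    refine Finset.sum_congr rfl fun i _ => ?_
    rw [Matrix.diag_apply, Matrix.mul_apply]
    exact Finset.sum_congr rfl fun j _ => by rw [Matrix.conjTranspose_apply]
  rw [this]
  refine Finset.sum_nonneg fun i _ => Finset.sum_nonneg fun j _ => star_mul_self_nonneg _

lemma perm_eq_one_of_le {n : ℕ} (g : Equiv.Perm (Fin n)) (h : ∀ i, g i ≤ i) : g = 1 := by
  have hsum : ∑ i : Fin n, ((g i : ℕ)) = ∑ i : Fin n, (i : ℕ) :=
    Equiv.sum_comp g (fun i : Fin n => (i : ℕ))
  have hle : ∀ i ∈ Finset.univ, ((g i : ℕ)) ≤ (i : ℕ) := fun i _ => h i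
  have := (Finset.sum_eq_sum_iff_of_le hle).mp hsum
  ext i
  exact this i (Finset.mem_univ i)

set_option maxHeartbeats 1000000 in
lemma exists_cholesky {n : ℕ} (A : Matrix (Fin n) (Fin n) ℂ) (hA : A.PosDef) :
    ∃ B : Matrix (Fin n) (Fin n) ℂ, (∀ r c : Fin n, c < r → B r c = 0) ∧ A = Bᴴ * B := by
  letI : WellFoundedLT (Fin n) := Finite.to_wellFoundedLT
  letI : DecidableEq (Fin n) := fun a b => LinearOrder.toDecidableEq a b
  haveI h1 : Invertible (LDL.lowerInv hA) := LDL.invertibleLowerInv hA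
  letI := LDL.invertibleLowerInv hA
  have hWtri : ∀ i j : Fin n, i < j → LDL.lowerInv hA i j = 0 := fun i j hij =>
    LDL.lowerInv_triangular hA hij
  have hLtri : ∀ i j : Fin n, i < j → LDL.lower hA i j = 0 := by
    have hWbt : (LDL.lowerInv hA).BlockTriangular (OrderDual.toDual : Fin n → (Fin n)ᵒᵈ) :=
      fun i j hij => hWtri i j hij
    have hinv := Matrix.blockTriangular_inv_of_blockTriangular hWbt
    intro i j hij
    rw [LDL.lower]
    exact hinv hij
  have hdiagPSD : (LDL.diag hA).PosSemidef := by
    rw [LDL.diag_eq_lowerInv_conj]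
    exact hA.posSemidef.mul_mul_conjTranspose_same _
  have hdnn : ∀ i, 0 ≤ LDL.diagEntries hA i := by
    rw [LDL.diag] at hdiagPSD
    exact Matrix.posSemidef_diagonal_iff.mp hdiagPSD
  set e : Fin n → ℂ := fun i => (Real.sqrt (LDL.diagEntries hA i).re : ℂ) with he
  have hee : ∀ i, star (e i) * e i = LDL.diagEntries hA i := by
    intro i
    obtain ⟨hre, him⟩ := Complex.le_def.mp (hdnn i)
    simp only [he, Complex.star_def, Complex.conj_ofReal, ← Complex.ofReal_mul,
      Real.mul_self_sqrt (by simpa using hre)]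
    apply Complex.ext
    · simp
    · simpa using him
  refine ⟨Matrix.diagonal e * (LDL.lower hA)ᴴ, ?_, ?_⟩
  · intro r c hcr
    rw [Matrix.diagonal_mul, Matrix.conjTranspose_apply, hLtri c r hcr, star_zero, mul_zero]
  · have hdiag : (Matrix.diagonal e)ᴴ * (Matrix.diagonal e) = LDL.diag hA := by
      rw [Matrix.diagonal_conjTranspose, Matrix.diagonal_mul_diagonal, LDL.diag]
      refine congrArg Matrix.diagonal (funext fun i => ?_)
      simpa using hee i
    calc A = LDL.lower hA * LDL.diag hA * (LDL.lower hA)ᴴ := (LDL.lower_conj_diag hA).symm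
      _ = (Matrix.diagonal e * (LDL.lower hA)ᴴ)ᴴ * (Matrix.diagonal e * (LDL.lower hA)ᴴ) := by
          rw [Matrix.conjTranspose_mul, Matrix.conjTranspose_conjTranspose, ← hdiag]
          noncomm_ring

lemma schur_posDef (n : ℕ) (A : Matrix (Fin n) (Fin n) ℂ) (hA : A.PosDef)
    (V : FDRep ℂ (Equiv.Perm (Fin n))) :
    FDRep.character V 1 * A.det ≤ immanant (FDRep.character V) A := by
  classical
  obtain ⟨B, hBtri, hAB⟩ := exists_cholesky A hA
  set χ := FDRep.character V with hχ
  set β : (Fin n → Fin n) → ℂ := fun f => ∏ i, B (f i) i with hβ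
  -- β vanishes on nontrivial permutations
  have hβ0 : ∀ g : Equiv.Perm (Fin n), g ≠ 1 → β ⇑g = 0 := by
    intro g hg
    by_contra h0
    have hle : ∀ i, g i ≤ i := by
      intro i
      by_contra hlt
      push_neg at hlt
      exact h0 (Finset.prod_eq_zero (Finset.mem_univ i) (hBtri _ _ hlt))
    exact hg (perm_eq_one_of_le g hle)
  -- the entry-product formula
  have hprod : ∀ σ : Equiv.Perm (Fin n),
      ∏ i, A (σ i) i = ∑ f : Fin n → Fin n, star (β f) * β (f ∘ ⇑σ) := by
    intro σ
    have h1 : ∀ i, A (σ i) i = ∑ k, star (B k (σ i)) * B k i := by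
      intro i
      rw [hAB, Matrix.mul_apply]
      exact Finset.sum_congr rfl fun k _ => by rw [Matrix.conjTranspose_apply]
    calc ∏ i, A (σ i) i = ∏ i, ∑ k, star (B k (σ i)) * B k i :=
          Finset.prod_congr rfl fun i _ => h1 i
      _ = ∑ f ∈ Fintype.piFinset (fun _ : Fin n => (Finset.univ : Finset (Fin n))),
            ∏ i, star (B (f i) (σ i)) * B (f i) i := Finset.prod_univ_sum _ _
      _ = ∑ f : Fin n → Fin n, star (β (f ∘ ⇑σ⁻¹)) * β f := by
          rw [Fintype.piFinset_univ]
          refine Finset.sum_congr rfl fun f _ => ?_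
          rw [Finset.prod_mul_distrib]
          congr 1
          rw [← star_prod]
          congr 1
          calc ∏ i, B (f i) (σ i) = ∏ j, B (f (σ⁻¹ j)) (σ (σ⁻¹ j)) :=
                (Equiv.prod_comp σ⁻¹ (fun i => B (f i) (σ i))).symm
            _ = ∏ j, B ((f ∘ ⇑σ⁻¹) j) j :=
                Finset.prod_congr rfl fun j _ => by rw [Equiv.Perm.coe_inv, Equiv.apply_symm_apply]; rfl
      _ = ∑ f : Fin n → Fin n, star (β f) * β (f ∘ ⇑σ) := by
          refine Fintype.sum_equiv (Equiv.arrowCongr σ (Equiv.refl (Fin n))) _ _ fun f => ?_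
          have he : (Equiv.arrowCongr σ (Equiv.refl (Fin n))) f = f ∘ ⇑σ⁻¹ := by
            funext x
            simp [Equiv.arrowCongr_apply, Function.comp]
          rw [he]
          congr 2
          funext x
          simp [Function.comp, Equiv.symm_apply_apply]
  -- immanant in terms of β
  have himm : immanant χ A = ∑ σ : Equiv.Perm (Fin n),
      χ σ * ∑ f : Fin n → Fin n, star (β f) * β (f ∘ ⇑σ) := by
    rw [immanant]
    exact Finset.sum_congr rfl fun σ _ => by rw [hprod σ]
  -- the orbit quadratic form
  set Q : (Fin n → Fin n) → ℂ := fun f => ∑ ρ : Equiv.Perm (Fin n), ∑ τ : Equiv.Perm (Fin n),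
    χ (ρ⁻¹ * τ) * (star (β (f ∘ ⇑ρ)) * β (f ∘ ⇑τ)) with hQ
  have hQ0 : ∀ f, 0 ≤ Q f := fun f => char_form_nonneg V (fun τ => β (f ∘ ⇑τ))
  set N := Fintype.card (Equiv.Perm (Fin n)) with hN
  -- total sum identity
  have hsum : ∑ f : Fin n → Fin n, Q f = (N : ℂ) * immanant χ A := by
    have key : ∀ ρ : Equiv.Perm (Fin n),
        (∑ f : Fin n → Fin n, ∑ τ : Equiv.Perm (Fin n),
          χ (ρ⁻¹ * τ) * (star (β (f ∘ ⇑ρ)) * β (f ∘ ⇑τ))) = immanant χ A := by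
      intro ρ
      rw [himm]
      calc ∑ f : Fin n → Fin n, ∑ τ : Equiv.Perm (Fin n),
            χ (ρ⁻¹ * τ) * (star (β (f ∘ ⇑ρ)) * β (f ∘ ⇑τ))
          = ∑ f : Fin n → Fin n, ∑ σ : Equiv.Perm (Fin n),
            χ σ * (star (β (f ∘ ⇑ρ)) * β ((f ∘ ⇑ρ) ∘ ⇑σ)) := by
            refine Finset.sum_congr rfl fun f _ => ?_
            refine (Fintype.sum_equiv (Equiv.mulLeft ρ) _ _ fun σ => ?_).symm
            have h1 : ρ⁻¹ * (Equiv.mulLeft ρ σ) = σ := by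
              simp [Equiv.coe_mulLeft, inv_mul_cancel_left]
            have h2 : (f ∘ ⇑ρ) ∘ ⇑σ = f ∘ ⇑(Equiv.mulLeft ρ σ) := by
              funext x
              simp [Equiv.coe_mulLeft, Function.comp, Equiv.Perm.mul_apply]
            rw [h1, ← h2]
          _ = ∑ σ : Equiv.Perm (Fin n), ∑ f : Fin n → Fin n,
            χ σ * (star (β (f ∘ ⇑ρ)) * β ((f ∘ ⇑ρ) ∘ ⇑σ)) := Finset.sum_comm
          _ = ∑ σ : Equiv.Perm (Fin n),
            χ σ * ∑ f : Fin n → Fin n, star (β f) * β (f ∘ ⇑σ) := by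
            refine Finset.sum_congr rfl fun σ _ => ?_
            rw [Finset.mul_sum]
            refine Fintype.sum_equiv (Equiv.arrowCongr ρ⁻¹ (Equiv.refl (Fin n))) _ _ fun f => ?_
            have he : (Equiv.arrowCongr ρ⁻¹ (Equiv.refl (Fin n))) f = f ∘ ⇑ρ := by
              funext x
              simp [Equiv.arrowCongr_apply, Function.comp]
              rfl
            rw [he]
    calc ∑ f : Fin n → Fin n, Q f
        = ∑ ρ : Equiv.Perm (Fin n), ∑ f : Fin n → Fin n, ∑ τ : Equiv.Perm (Fin n),
          χ (ρ⁻¹ * τ) * (star (β (f ∘ ⇑ρ)) * β (f ∘ ⇑τ)) := Finset.sum_comm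
      _ = ∑ _ρ : Equiv.Perm (Fin n), immanant χ A :=
          Finset.sum_congr rfl fun ρ _ => key ρ
      _ = (N : ℂ) * immanant χ A := by
          rw [Finset.sum_const, Finset.card_univ, nsmul_eq_mul, hN]
  -- value on bijections
  have hQperm : ∀ g : Equiv.Perm (Fin n), Q ⇑g = χ 1 * A.det := by
    intro g
    have hβg : ∀ τ : Equiv.Perm (Fin n), τ ≠ g⁻¹ → β (⇑g ∘ ⇑τ) = 0 := by
      intro τ hτ
      have : (⇑g ∘ ⇑τ) = ⇑(g * τ) := (Equiv.Perm.coe_mul g τ).symm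
      rw [this]
      refine hβ0 _ fun h1 => hτ ?_
      exact eq_inv_of_mul_eq_one_right h1
    have hcollapse : Q ⇑g = χ ((g⁻¹)⁻¹ * g⁻¹) * (star (β (⇑g ∘ ⇑g⁻¹)) * β (⇑g ∘ ⇑g⁻¹)) := by
      simp only [hQ]
      rw [Finset.sum_eq_single g⁻¹]
      · rw [Finset.sum_eq_single g⁻¹]
        · intro τ _ hτ
          rw [hβg τ hτ, mul_zero, mul_zero]
        · intro h
          exact absurd (Finset.mem_univ _) h
      · intro ρ _ hρ
        refine Finset.sum_eq_zero fun τ _ => ?_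
        rw [hβg ρ hρ, star_zero, zero_mul, mul_zero]
      · intro h
        exact absurd (Finset.mem_univ _) h
    rw [hcollapse]
    have h2 : ⇑g ∘ ⇑g⁻¹ = ⇑(1 : Equiv.Perm (Fin n)) := by
      funext x
      simp
    have h3 : β ⇑(1 : Equiv.Perm (Fin n)) = ∏ i, B i i := rfl
    rw [h2, h3, inv_inv, mul_inv_cancel]
    congr 1
    have hdetB : B.det = ∏ i, B i i :=
      Matrix.det_of_upperTriangular (fun i j h => hBtri i j h)
    rw [hAB, Matrix.det_mul, Matrix.det_conjTranspose, hdetB]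
  -- combine everything
  have hconst : ∑ g : Equiv.Perm (Fin n), Q ⇑g = (N : ℂ) * (χ 1 * A.det) := by
    calc ∑ g : Equiv.Perm (Fin n), Q ⇑g = ∑ _g : Equiv.Perm (Fin n), (χ 1 * A.det) :=
          Finset.sum_congr rfl fun g _ => hQperm g
      _ = (N : ℂ) * (χ 1 * A.det) := by
          rw [Finset.sum_const, Finset.card_univ, nsmul_eq_mul, hN]
  have himage : ∑ f ∈ Finset.univ.image (fun g : Equiv.Perm (Fin n) => ⇑g), Q f
      = ∑ g : Equiv.Perm (Fin n), Q ⇑g :=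
    Finset.sum_image (fun x _ y _ h => Equiv.coe_fn_injective h)
  have hle : (N : ℂ) * (χ 1 * A.det) ≤ (N : ℂ) * immanant χ A := by
    calc (N : ℂ) * (χ 1 * A.det) = ∑ g : Equiv.Perm (Fin n), Q ⇑g := hconst.symm
      _ = ∑ f ∈ Finset.univ.image (fun g : Equiv.Perm (Fin n) => ⇑g), Q f := himage.symm
      _ ≤ ∑ f : Fin n → Fin n, Q f :=
          Finset.sum_le_sum_of_subset_of_nonneg (Finset.subset_univ _) (fun f _ _ => hQ0 f)
      _ = (N : ℂ) * immanant χ A := hsum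
  have hNR : (0 : ℝ) < (N : ℝ) := by
    have : 0 < N := by rw [hN]; exact Fintype.card_pos
    exact_mod_cast this
  obtain ⟨hre, him⟩ := Complex.le_def.mp hle
  have e1 : ∀ z : ℂ, ((N : ℂ) * z).re = (N : ℝ) * z.re := by
    intro z
    simp [Complex.mul_re]
  have e2 : ∀ z : ℂ, ((N : ℂ) * z).im = (N : ℝ) * z.im := by
    intro z
    simp [Complex.mul_im]
  refine Complex.le_def.mpr ⟨?_, ?_⟩
  · rw [e1, e1] at hre
    exact le_of_mul_le_mul_left hre hNR
  · rw [e2, e2] at him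
    exact mul_left_cancel₀ (ne_of_gt hNR) him

/-- Schur's inequality: for a positive semidefinite Hermitian matrix `A` and any irreducible
character `χ^λ` of the symmetric group `S_n` (every irreducible character of `S_n` is the
character χ^λ of an irreducible representation indexed by a partition λ of n),
`χ^λ(1) ⬝ det A ≤ Imm_{χ^λ}(A)`. -/
theorem schur_immanant_inequality (n : ℕ) (A : Matrix (Fin n) (Fin n) ℂ)
    (hA : A.PosSemidef) (V : FDRep ℂ (Equiv.Perm (Fin n)))
    (hV : CategoryTheory.Simple V) :
    FDRep.character V 1 * A.det ≤ immanant (FDRep.character V) A := by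
  classical
  set χ := FDRep.character V with hχ
  -- the perturbed matrix
  set M : ℝ → Matrix (Fin n) (Fin n) ℂ := fun ε => A + (ε : ℂ) • (1 : Matrix (Fin n) (Fin n) ℂ)
    with hM
  have hMpos : ∀ ε : ℝ, 0 < ε → (M ε).PosDef := by
    intro ε hε
    refine Matrix.PosDef.posSemidef_add hA ?_
    rw [Matrix.smul_one_eq_diagonal]
    refine Matrix.PosDef.diagonal fun i => ?_
    rw [Complex.lt_def]
    constructor
    · simpa using hε
    · simp
  -- the gap function
  set F : ℝ → ℂ := fun ε => immanant χ (M ε) - χ 1 * (M ε).det with hF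
  have hFpos : ∀ ε : ℝ, 0 < ε → 0 ≤ F ε := by
    intro ε hε
    rw [hF]
    simp only
    rw [sub_nonneg]
    exact schur_posDef n (M ε) (hMpos ε hε) V
  -- continuity
  have hMc : ∀ i j : Fin n, Continuous fun ε : ℝ => M ε i j := by
    intro i j
    have : (fun ε : ℝ => M ε i j)
        = fun ε : ℝ => A i j + (ε : ℂ) * (1 : Matrix (Fin n) (Fin n) ℂ) i j := by
      funext ε
      rw [hM]
      simp [Matrix.add_apply, Matrix.smul_apply, smul_eq_mul]
    rw [this]
    exact continuous_const.add ((Complex.continuous_ofReal).mul continuous_const)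
  have hFc : Continuous F := by
    rw [hF]
    refine Continuous.sub ?_ (continuous_const.mul ?_)
    · unfold immanant
      refine continuous_finset_sum _ fun σ _ => continuous_const.mul ?_
      exact continuous_finset_prod _ fun i _ => hMc (σ i) i
    · have : (fun ε : ℝ => (M ε).det)
          = fun ε : ℝ => ∑ σ : Equiv.Perm (Fin n),
              (Equiv.Perm.sign σ : ℂ) * ∏ i, M ε (σ i) i := by
        funext ε
        rw [Matrix.det_apply]
        refine Finset.sum_congr rfl fun σ _ => ?_
        simp [Units.smul_def, zsmul_eq_mul]
      rw [this]
      refine continuous_finset_sum _ fun σ _ => continuous_const.mul ?_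
      exact continuous_finset_prod _ fun i _ => hMc (σ i) i
  -- take the limit ε → 0⁺
  have hlim : Filter.Tendsto F (nhdsWithin 0 (Set.Ioi 0)) (nhds (F 0)) :=
    (hFc.tendsto 0).mono_left nhdsWithin_le_nhds
  have hmem : ∀ᶠ ε in nhdsWithin (0:ℝ) (Set.Ioi 0), 0 ≤ F ε := by
    filter_upwards [self_mem_nhdsWithin] with ε hε
    exact hFpos ε hε
  have hre : 0 ≤ (F 0).re := by
    have h1 : Filter.Tendsto (fun ε => (F ε).re) (nhdsWithin 0 (Set.Ioi 0)) (nhds ((F 0).re)) :=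
      (Complex.continuous_re.tendsto _).comp hlim
    refine ge_of_tendsto h1 ?_
    filter_upwards [hmem] with ε hε
    exact (Complex.le_def.mp hε).1
  have him : (F 0).im = 0 := by
    have h1 : Filter.Tendsto (fun ε => (F ε).im) (nhdsWithin 0 (Set.Ioi 0)) (nhds ((F 0).im)) :=
      (Complex.continuous_im.tendsto _).comp hlim
    have h2 : Filter.Tendsto (fun ε => (F ε).im) (nhdsWithin (0:ℝ) (Set.Ioi 0)) (nhds 0) := by
      refine Filter.Tendsto.congr' ?_ tendsto_const_nhds
      filter_upwards [hmem] with ε hε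
      simpa using (Complex.le_def.mp hε).2
    exact tendsto_nhds_unique h1 h2
  have hF0 : 0 ≤ F 0 := Complex.le_def.mpr ⟨by simpa using hre, by simpa using him.symm⟩
  have hM0 : M 0 = A := by
    simp [hM]
  simp only [hF, hM0] at hF0
  rw [sub_nonneg] at hF0
  exact hF0
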